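/- arXiv:0901.0203 — 2 statements merged into one kernel-verified Lean document; each statement's English description precedes it below -/
import Mathlib

section
/- The group G contains exactly 1 element of order 1, exactly 15 elements of order 2, exactly 32 elements of order 3, exactly 24 elements of order 4, and exactly 24 elements of order 8 (and no elements of any other order). -/
open Matrix

/-- The matrix of the dualization functor `X` acting on `(γ,β,α,λ,μ,ν)`. -/
def MXmat : Matrix (Fin 6) (Fin 6) ℤ :=
  !![0,0,0,0,-1,0; 0,0,0,0,0,-1; 0,0,1,0,0,0; 0,0,0,-1,0,0; -1,0,0,0,0,0; 0,-1,0,0,0,0]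

/-- The matrix of the dualization functor `Y`. -/
def MYmat : Matrix (Fin 6) (Fin 6) ℤ :=
  !![0,0,0,-1,0,0; 0,1,0,0,0,0; 0,0,0,0,0,-1; -1,0,0,0,0,0; 0,0,0,0,-1,0; 0,0,-1,0,0,0]

/-- The matrix of the dualization functor `Z`. -/
def MZmat : Matrix (Fin 6) (Fin 6) ℤ :=
  !![1,0,0,0,0,0; 0,0,0,-1,0,0; 0,0,0,0,-1,0; 0,-1,0,0,0,0; 0,0,-1,0,0,0; 0,0,0,0,0,-1]

/-- `M_X` as an element of `GL(6,ℤ)` (it is an involution, so it is its own inverse). -/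
def MX : GL (Fin 6) ℤ := ⟨MXmat, MXmat, by decide, by decide⟩

/-- `M_Y` as an element of `GL(6,ℤ)`. -/
def MY : GL (Fin 6) ℤ := ⟨MYmat, MYmat, by decide, by decide⟩

/-- `M_Z` as an element of `GL(6,ℤ)`. -/
def MZ : GL (Fin 6) ℤ := ⟨MZmat, MZmat, by decide, by decide⟩

/-- The subgroup of `GL(6,ℤ)` generated by `M_X`, `M_Y`, `M_Z`: a faithful model of the
duality group `DF₃` of triple vector bundles. -/
def G : Subgroup (GL (Fin 6) ℤ) := Subgroup.closure {MX, MY, MZ}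

lemma hMX : MX ∈ G := Subgroup.subset_closure (by simp)
lemma hMY : MY ∈ G := Subgroup.subset_closure (by simp)
lemma hMZ : MZ ∈ G := Subgroup.subset_closure (by simp)

def g₁ : GL (Fin 6) ℤ := (MX * MY * MX * MZ) ^ 2
def g₂ : GL (Fin 6) ℤ := (MY * MZ * MY * MX) ^ 2
def g₃ : GL (Fin 6) ℤ := (MZ * MX * MZ * MY) ^ 2

lemma hg₁ : g₁ ∈ G :=
  G.pow_mem (G.mul_mem (G.mul_mem (G.mul_mem hMX hMY) hMX) hMZ) 2
lemma hg₂ : g₂ ∈ G :=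
  G.pow_mem (G.mul_mem (G.mul_mem (G.mul_mem hMY hMZ) hMY) hMX) 2
lemma hg₃ : g₃ ∈ G :=
  G.pow_mem (G.mul_mem (G.mul_mem (G.mul_mem hMZ hMX) hMZ) hMY) 2

/-- Signed permutation data: row `i` of the matrix has entry `sign i` in column `perm i`. -/
abbrev SP : Type := (Fin 6 → Fin 6) × (Fin 6 → ℤ)

def spmul (a b : SP) : SP := (fun i => b.1 (a.1 i), fun i => a.2 i * b.2 (a.1 i))

def spone : SP := (id, fun _ => 1)

def toMat (a : SP) : Matrix (Fin 6) (Fin 6) ℤ :=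
  Matrix.of fun i j => if a.1 i = j then a.2 i else 0

lemma toMat_one : toMat spone = 1 := by
  ext i j
  simp [toMat, spone, Matrix.one_apply]
  by_cases h : i = j <;> simp [h]

lemma toMat_mul (a b : SP) : toMat a * toMat b = toMat (spmul a b) := by
  ext i j
  rw [Matrix.mul_apply]
  simp only [toMat, spmul, Matrix.of_apply]
  rw [Finset.sum_eq_single (a.1 i)]
  · by_cases h : b.1 (a.1 i) = j <;> simp [h]
  · intro k _ hk
    simp [Ne.symm hk]
  · intro h
    exact absurd (Finset.mem_univ _) h

def spPow (a : SP) : ℕ → SP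
  | 0 => spone
  | n + 1 => spmul (spPow a n) a

lemma toMat_pow (a : SP) (n : ℕ) : toMat a ^ n = toMat (spPow a n) := by
  induction n with
  | zero => rw [pow_zero, spPow, toMat_one]
  | succ n ih => rw [pow_succ, ih, toMat_mul, spPow]

def spX : SP := (![4,5,2,3,0,1], ![-1,-1,1,-1,-1,-1])
def spY : SP := (![3,1,5,0,4,2], ![-1,1,-1,-1,-1,-1])
def spZ : SP := (![0,3,4,1,2,5], ![1,-1,-1,-1,-1,-1])

lemma hXv : (MX : GL (Fin 6) ℤ).val = toMat spX := by decide
lemma hYv : (MY : GL (Fin 6) ℤ).val = toMat spY := by decide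
lemma hZv : (MZ : GL (Fin 6) ℤ).val = toMat spZ := by decide

def LSP1 : List SP := [
  (![0,1,2,3,4,5], ![1,1,1,1,1,1])]

def LSP2 : List SP := [
  (![4,5,2,3,0,1], ![-1,-1,1,-1,-1,-1]),
  (![3,1,5,0,4,2], ![-1,1,-1,-1,-1,-1]),
  (![0,3,4,1,2,5], ![1,-1,-1,-1,-1,-1]),
  (![0,2,1,4,3,5], ![-1,1,1,-1,-1,1]),
  (![2,1,0,5,4,3], ![1,-1,1,-1,1,-1]),
  (![1,0,2,3,5,4], ![1,1,-1,1,-1,-1]),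
  (![1,0,2,3,5,4], ![-1,-1,-1,1,1,1]),
  (![2,1,0,5,4,3], ![-1,-1,-1,1,1,1]),
  (![0,2,1,4,3,5], ![-1,-1,-1,1,1,1]),
  (![0,3,4,1,2,5], ![1,1,1,1,1,-1]),
  (![3,1,5,0,4,2], ![1,1,1,1,-1,1]),
  (![4,5,2,3,0,1], ![1,1,1,-1,1,1]),
  (![0,1,2,3,4,5], ![1,-1,-1,-1,-1,1]),
  (![0,1,2,3,4,5], ![-1,-1,1,1,-1,-1]),
  (![0,1,2,3,4,5], ![-1,1,-1,-1,1,-1])]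

def LSP3 : List SP := [
  (![4,2,5,0,3,1], ![1,1,-1,1,1,-1]),
  (![2,5,4,1,0,3], ![1,1,-1,1,-1,1]),
  (![3,5,1,4,0,2], ![1,-1,1,1,1,-1]),
  (![1,3,5,0,2,4], ![1,-1,1,-1,1,1]),
  (![4,3,0,5,2,1], ![-1,1,1,1,-1,1]),
  (![3,0,4,1,5,2], ![-1,1,1,-1,1,1]),
  (![2,0,1,4,5,3], ![-1,1,-1,-1,1,-1]),
  (![1,2,0,5,3,4], ![1,-1,-1,-1,-1,1]),
  (![1,2,0,5,3,4], ![-1,-1,1,1,-1,-1]),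
  (![2,0,1,4,5,3], ![1,-1,-1,-1,-1,1]),
  (![2,0,1,4,5,3], ![-1,-1,1,1,-1,-1]),
  (![1,2,0,5,3,4], ![-1,1,-1,-1,1,-1]),
  (![4,3,0,5,2,1], ![-1,-1,-1,-1,1,1]),
  (![3,0,4,1,5,2], ![-1,-1,-1,1,-1,1]),
  (![1,3,5,0,2,4], ![-1,1,1,-1,-1,-1]),
  (![3,0,4,1,5,2], ![1,-1,1,-1,-1,-1]),
  (![3,5,1,4,0,2], ![-1,-1,-1,-1,1,1]),
  (![1,3,5,0,2,4], ![-1,-1,-1,1,1,-1]),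
  (![2,5,4,1,0,3], ![-1,1,1,-1,-1,-1]),
  (![4,3,0,5,2,1], ![1,1,-1,-1,-1,-1]),
  (![4,2,5,0,3,1], ![-1,-1,-1,1,-1,1]),
  (![2,5,4,1,0,3], ![-1,-1,-1,1,1,-1]),
  (![4,2,5,0,3,1], ![1,-1,1,-1,-1,-1]),
  (![3,5,1,4,0,2], ![1,1,-1,-1,-1,-1]),
  (![2,5,4,1,0,3], ![1,-1,1,-1,1,1]),
  (![1,3,5,0,2,4], ![1,1,-1,1,-1,1]),
  (![3,5,1,4,0,2], ![-1,1,1,1,-1,1]),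
  (![1,2,0,5,3,4], ![1,1,1,1,1,1]),
  (![4,3,0,5,2,1], ![1,-1,1,1,1,-1]),
  (![4,2,5,0,3,1], ![-1,1,1,-1,1,1]),
  (![3,0,4,1,5,2], ![1,1,-1,1,1,-1]),
  (![2,0,1,4,5,3], ![1,1,1,1,1,1])]

def LSP4 : List SP := [
  (![0,4,3,2,1,5], ![-1,-1,-1,1,1,-1]),
  (![5,4,2,3,1,0], ![1,1,-1,-1,-1,-1]),
  (![5,1,3,2,4,0], ![-1,-1,-1,1,-1,1]),
  (![5,1,3,2,4,0], ![1,-1,1,-1,-1,-1]),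
  (![5,4,2,3,1,0], ![-1,-1,-1,-1,1,1]),
  (![0,4,3,2,1,5], ![-1,1,1,-1,-1,-1]),
  (![5,1,3,2,4,0], ![-1,1,1,-1,1,1]),
  (![0,4,3,2,1,5], ![1,-1,1,-1,1,1]),
  (![5,4,2,3,1,0], ![-1,1,1,1,-1,1]),
  (![0,4,3,2,1,5], ![1,1,-1,1,-1,1]),
  (![5,4,2,3,1,0], ![1,-1,1,1,1,-1]),
  (![5,1,3,2,4,0], ![1,1,-1,1,1,-1]),
  (![2,1,0,5,4,3], ![1,1,-1,1,-1,-1]),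
  (![1,0,2,3,5,4], ![1,-1,1,-1,1,-1]),
  (![3,1,5,0,4,2], ![1,-1,-1,-1,1,1]),
  (![0,3,4,1,2,5], ![-1,1,-1,-1,1,1]),
  (![0,2,1,4,3,5], ![1,1,-1,1,-1,-1]),
  (![1,0,2,3,5,4], ![-1,1,1,-1,-1,1]),
  (![4,5,2,3,0,1], ![1,-1,-1,1,-1,1]),
  (![0,3,4,1,2,5], ![-1,-1,1,1,-1,1]),
  (![0,2,1,4,3,5], ![1,-1,1,-1,1,-1]),
  (![2,1,0,5,4,3], ![-1,1,1,-1,-1,1]),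
  (![4,5,2,3,0,1], ![-1,1,-1,1,1,-1]),
  (![3,1,5,0,4,2], ![-1,-1,1,1,1,-1])]

def LSP8 : List SP := [
  (![2,4,5,0,1,3], ![-1,-1,1,1,-1,1]),
  (![5,2,4,1,3,0], ![-1,-1,1,1,1,-1]),
  (![1,5,3,2,0,4], ![-1,1,-1,-1,1,1]),
  (![5,3,1,4,2,0], ![-1,1,-1,1,1,-1]),
  (![4,0,3,2,5,1], ![1,-1,-1,-1,1,1]),
  (![3,4,0,5,1,2], ![1,-1,-1,1,-1,1]),
  (![4,0,3,2,5,1], ![1,1,1,1,-1,1]),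
  (![3,4,0,5,1,2], ![1,1,1,-1,1,1]),
  (![5,3,1,4,2,0], ![1,-1,-1,1,-1,1]),
  (![1,5,3,2,0,4], ![1,1,1,1,1,-1]),
  (![5,3,1,4,2,0], ![1,1,1,-1,1,1]),
  (![3,4,0,5,1,2], ![-1,1,-1,1,1,-1]),
  (![5,2,4,1,3,0], ![1,-1,-1,-1,1,1]),
  (![2,4,5,0,1,3], ![1,1,1,1,1,-1]),
  (![4,0,3,2,5,1], ![-1,-1,1,1,1,-1]),
  (![5,2,4,1,3,0], ![1,1,1,1,-1,1]),
  (![2,4,5,0,1,3], ![-1,1,-1,-1,1,1]),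
  (![1,5,3,2,0,4], ![-1,-1,1,1,-1,1]),
  (![1,5,3,2,0,4], ![1,-1,-1,-1,-1,-1]),
  (![4,0,3,2,5,1], ![-1,1,-1,-1,-1,-1]),
  (![2,4,5,0,1,3], ![1,-1,-1,-1,-1,-1]),
  (![3,4,0,5,1,2], ![-1,-1,1,-1,-1,-1]),
  (![5,2,4,1,3,0], ![-1,1,-1,-1,-1,-1]),
  (![5,3,1,4,2,0], ![-1,-1,1,-1,-1,-1])]

def LSP : List SP := LSP1 ++ LSP2 ++ LSP3 ++ LSP4 ++ LSP8

lemma wlem0 : ∃ g : GL (Fin 6) ℤ, g ∈ G ∧ g.val = toMat (![0,1,2,3,4,5], ![1,1,1,1,1,1]) :=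
  ⟨1, G.one_mem, by rw [Units.val_one, ← toMat_one]; exact congrArg toMat (by decide)⟩

lemma wlem1 : ∃ g : GL (Fin 6) ℤ, g ∈ G ∧ g.val = toMat (![4,5,2,3,0,1], ![-1,-1,1,-1,-1,-1]) :=
  ⟨(MX), hMX, by simp only [Units.val_mul, hXv, hYv, hZv, toMat_mul]; exact congrArg toMat (by decide)⟩

lemma wlem2 : ∃ g : GL (Fin 6) ℤ, g ∈ G ∧ g.val = toMat (![3,1,5,0,4,2], ![-1,1,-1,-1,-1,-1]) :=
  ⟨(MY), hMY, by simp only [Units.val_mul, hXv, hYv, hZv, toMat_mul]; exact congrArg toMat (by decide)⟩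

lemma wlem3 : ∃ g : GL (Fin 6) ℤ, g ∈ G ∧ g.val = toMat (![0,3,4,1,2,5], ![1,-1,-1,-1,-1,-1]) :=
  ⟨(MZ), hMZ, by simp only [Units.val_mul, hXv, hYv, hZv, toMat_mul]; exact congrArg toMat (by decide)⟩

lemma wlem4 : ∃ g : GL (Fin 6) ℤ, g ∈ G ∧ g.val = toMat (![0,2,1,4,3,5], ![-1,1,1,-1,-1,1]) :=
  ⟨(MX*MY*MX), (G.mul_mem (G.mul_mem hMX hMY) hMX), by simp only [Units.val_mul, hXv, hYv, hZv, toMat_mul]; exact congrArg toMat (by decide)⟩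

lemma wlem5 : ∃ g : GL (Fin 6) ℤ, g ∈ G ∧ g.val = toMat (![2,1,0,5,4,3], ![1,-1,1,-1,1,-1]) :=
  ⟨(MX*MZ*MX), (G.mul_mem (G.mul_mem hMX hMZ) hMX), by simp only [Units.val_mul, hXv, hYv, hZv, toMat_mul]; exact congrArg toMat (by decide)⟩

lemma wlem6 : ∃ g : GL (Fin 6) ℤ, g ∈ G ∧ g.val = toMat (![1,0,2,3,5,4], ![1,1,-1,1,-1,-1]) :=
  ⟨(MY*MZ*MY), (G.mul_mem (G.mul_mem hMY hMZ) hMY), by simp only [Units.val_mul, hXv, hYv, hZv, toMat_mul]; exact congrArg toMat (by decide)⟩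

lemma wlem7 : ∃ g : GL (Fin 6) ℤ, g ∈ G ∧ g.val = toMat (![1,0,2,3,5,4], ![-1,-1,-1,1,1,1]) :=
  ⟨(MX*MY*MZ*MY*MX), (G.mul_mem (G.mul_mem (G.mul_mem (G.mul_mem hMX hMY) hMZ) hMY) hMX), by simp only [Units.val_mul, hXv, hYv, hZv, toMat_mul]; exact congrArg toMat (by decide)⟩

lemma wlem8 : ∃ g : GL (Fin 6) ℤ, g ∈ G ∧ g.val = toMat (![2,1,0,5,4,3], ![-1,-1,-1,1,1,1]) :=
  ⟨(MY*MX*MZ*MX*MY), (G.mul_mem (G.mul_mem (G.mul_mem (G.mul_mem hMY hMX) hMZ) hMX) hMY), by simp only [Units.val_mul, hXv, hYv, hZv, toMat_mul]; exact congrArg toMat (by decide)⟩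

lemma wlem9 : ∃ g : GL (Fin 6) ℤ, g ∈ G ∧ g.val = toMat (![0,2,1,4,3,5], ![-1,-1,-1,1,1,1]) :=
  ⟨(MZ*MX*MY*MX*MZ), (G.mul_mem (G.mul_mem (G.mul_mem (G.mul_mem hMZ hMX) hMY) hMX) hMZ), by simp only [Units.val_mul, hXv, hYv, hZv, toMat_mul]; exact congrArg toMat (by decide)⟩

lemma wlem10 : ∃ g : GL (Fin 6) ℤ, g ∈ G ∧ g.val = toMat (![0,3,4,1,2,5], ![1,1,1,1,1,-1]) :=
  ⟨(MX*MY*MX*MZ*MX*MY*MX), (G.mul_mem (G.mul_mem (G.mul_mem (G.mul_mem (G.mul_mem (G.mul_mem hMX hMY) hMX) hMZ) hMX) hMY) hMX), by simp only [Units.val_mul, hXv, hYv, hZv, toMat_mul]; exact congrArg toMat (by decide)⟩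

lemma wlem11 : ∃ g : GL (Fin 6) ℤ, g ∈ G ∧ g.val = toMat (![3,1,5,0,4,2], ![1,1,1,1,-1,1]) :=
  ⟨(MX*MZ*MX*MY*MX*MZ*MX), (G.mul_mem (G.mul_mem (G.mul_mem (G.mul_mem (G.mul_mem (G.mul_mem hMX hMZ) hMX) hMY) hMX) hMZ) hMX), by simp only [Units.val_mul, hXv, hYv, hZv, toMat_mul]; exact congrArg toMat (by decide)⟩

lemma wlem12 : ∃ g : GL (Fin 6) ℤ, g ∈ G ∧ g.val = toMat (![4,5,2,3,0,1], ![1,1,1,-1,1,1]) :=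
  ⟨(MY*MZ*MX*MY*MX*MZ*MY), (G.mul_mem (G.mul_mem (G.mul_mem (G.mul_mem (G.mul_mem (G.mul_mem hMY hMZ) hMX) hMY) hMX) hMZ) hMY), by simp only [Units.val_mul, hXv, hYv, hZv, toMat_mul]; exact congrArg toMat (by decide)⟩

lemma wlem13 : ∃ g : GL (Fin 6) ℤ, g ∈ G ∧ g.val = toMat (![0,1,2,3,4,5], ![1,-1,-1,-1,-1,1]) :=
  ⟨(MX*MY*MX*MZ*MX*MY*MX*MZ), (G.mul_mem (G.mul_mem (G.mul_mem (G.mul_mem (G.mul_mem (G.mul_mem (G.mul_mem hMX hMY) hMX) hMZ) hMX) hMY) hMX) hMZ), by simp only [Units.val_mul, hXv, hYv, hZv, toMat_mul]; exact congrArg toMat (by decide)⟩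

lemma wlem14 : ∃ g : GL (Fin 6) ℤ, g ∈ G ∧ g.val = toMat (![0,1,2,3,4,5], ![-1,-1,1,1,-1,-1]) :=
  ⟨(MX*MY*MZ*MX*MY*MX*MZ*MY), (G.mul_mem (G.mul_mem (G.mul_mem (G.mul_mem (G.mul_mem (G.mul_mem (G.mul_mem hMX hMY) hMZ) hMX) hMY) hMX) hMZ) hMY), by simp only [Units.val_mul, hXv, hYv, hZv, toMat_mul]; exact congrArg toMat (by decide)⟩

lemma wlem15 : ∃ g : GL (Fin 6) ℤ, g ∈ G ∧ g.val = toMat (![0,1,2,3,4,5], ![-1,1,-1,-1,1,-1]) :=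
  ⟨(MX*MZ*MX*MY*MX*MZ*MX*MY), (G.mul_mem (G.mul_mem (G.mul_mem (G.mul_mem (G.mul_mem (G.mul_mem (G.mul_mem hMX hMZ) hMX) hMY) hMX) hMZ) hMX) hMY), by simp only [Units.val_mul, hXv, hYv, hZv, toMat_mul]; exact congrArg toMat (by decide)⟩

lemma wlem16 : ∃ g : GL (Fin 6) ℤ, g ∈ G ∧ g.val = toMat (![4,2,5,0,3,1], ![1,1,-1,1,1,-1]) :=
  ⟨(MX*MY), (G.mul_mem hMX hMY), by simp only [Units.val_mul, hXv, hYv, hZv, toMat_mul]; exact congrArg toMat (by decide)⟩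

lemma wlem17 : ∃ g : GL (Fin 6) ℤ, g ∈ G ∧ g.val = toMat (![2,5,4,1,0,3], ![1,1,-1,1,-1,1]) :=
  ⟨(MX*MZ), (G.mul_mem hMX hMZ), by simp only [Units.val_mul, hXv, hYv, hZv, toMat_mul]; exact congrArg toMat (by decide)⟩

lemma wlem18 : ∃ g : GL (Fin 6) ℤ, g ∈ G ∧ g.val = toMat (![3,5,1,4,0,2], ![1,-1,1,1,1,-1]) :=
  ⟨(MY*MX), (G.mul_mem hMY hMX), by simp only [Units.val_mul, hXv, hYv, hZv, toMat_mul]; exact congrArg toMat (by decide)⟩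

lemma wlem19 : ∃ g : GL (Fin 6) ℤ, g ∈ G ∧ g.val = toMat (![1,3,5,0,2,4], ![1,-1,1,-1,1,1]) :=
  ⟨(MY*MZ), (G.mul_mem hMY hMZ), by simp only [Units.val_mul, hXv, hYv, hZv, toMat_mul]; exact congrArg toMat (by decide)⟩

lemma wlem20 : ∃ g : GL (Fin 6) ℤ, g ∈ G ∧ g.val = toMat (![4,3,0,5,2,1], ![-1,1,1,1,-1,1]) :=
  ⟨(MZ*MX), (G.mul_mem hMZ hMX), by simp only [Units.val_mul, hXv, hYv, hZv, toMat_mul]; exact congrArg toMat (by decide)⟩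

lemma wlem21 : ∃ g : GL (Fin 6) ℤ, g ∈ G ∧ g.val = toMat (![3,0,4,1,5,2], ![-1,1,1,-1,1,1]) :=
  ⟨(MZ*MY), (G.mul_mem hMZ hMY), by simp only [Units.val_mul, hXv, hYv, hZv, toMat_mul]; exact congrArg toMat (by decide)⟩

lemma wlem22 : ∃ g : GL (Fin 6) ℤ, g ∈ G ∧ g.val = toMat (![2,0,1,4,5,3], ![-1,1,-1,-1,1,-1]) :=
  ⟨(MX*MY*MZ*MX), (G.mul_mem (G.mul_mem (G.mul_mem hMX hMY) hMZ) hMX), by simp only [Units.val_mul, hXv, hYv, hZv, toMat_mul]; exact congrArg toMat (by decide)⟩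

lemma wlem23 : ∃ g : GL (Fin 6) ℤ, g ∈ G ∧ g.val = toMat (![1,2,0,5,3,4], ![1,-1,-1,-1,-1,1]) :=
  ⟨(MX*MZ*MY*MX), (G.mul_mem (G.mul_mem (G.mul_mem hMX hMZ) hMY) hMX), by simp only [Units.val_mul, hXv, hYv, hZv, toMat_mul]; exact congrArg toMat (by decide)⟩

lemma wlem24 : ∃ g : GL (Fin 6) ℤ, g ∈ G ∧ g.val = toMat (![1,2,0,5,3,4], ![-1,-1,1,1,-1,-1]) :=
  ⟨(MY*MX*MZ*MY), (G.mul_mem (G.mul_mem (G.mul_mem hMY hMX) hMZ) hMY), by simp only [Units.val_mul, hXv, hYv, hZv, toMat_mul]; exact congrArg toMat (by decide)⟩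

lemma wlem25 : ∃ g : GL (Fin 6) ℤ, g ∈ G ∧ g.val = toMat (![2,0,1,4,5,3], ![1,-1,-1,-1,-1,1]) :=
  ⟨(MY*MZ*MX*MY), (G.mul_mem (G.mul_mem (G.mul_mem hMY hMZ) hMX) hMY), by simp only [Units.val_mul, hXv, hYv, hZv, toMat_mul]; exact congrArg toMat (by decide)⟩

lemma wlem26 : ∃ g : GL (Fin 6) ℤ, g ∈ G ∧ g.val = toMat (![2,0,1,4,5,3], ![-1,-1,1,1,-1,-1]) :=
  ⟨(MZ*MX*MY*MZ), (G.mul_mem (G.mul_mem (G.mul_mem hMZ hMX) hMY) hMZ), by simp only [Units.val_mul, hXv, hYv, hZv, toMat_mul]; exact congrArg toMat (by decide)⟩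

lemma wlem27 : ∃ g : GL (Fin 6) ℤ, g ∈ G ∧ g.val = toMat (![1,2,0,5,3,4], ![-1,1,-1,-1,1,-1]) :=
  ⟨(MZ*MY*MX*MZ), (G.mul_mem (G.mul_mem (G.mul_mem hMZ hMY) hMX) hMZ), by simp only [Units.val_mul, hXv, hYv, hZv, toMat_mul]; exact congrArg toMat (by decide)⟩

lemma wlem28 : ∃ g : GL (Fin 6) ℤ, g ∈ G ∧ g.val = toMat (![4,3,0,5,2,1], ![-1,-1,-1,-1,1,1]) :=
  ⟨(MX*MY*MX*MZ*MX*MY), (G.mul_mem (G.mul_mem (G.mul_mem (G.mul_mem (G.mul_mem hMX hMY) hMX) hMZ) hMX) hMY), by simp only [Units.val_mul, hXv, hYv, hZv, toMat_mul]; exact congrArg toMat (by decide)⟩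

lemma wlem29 : ∃ g : GL (Fin 6) ℤ, g ∈ G ∧ g.val = toMat (![3,0,4,1,5,2], ![-1,-1,-1,1,-1,1]) :=
  ⟨(MX*MY*MX*MZ*MY*MX), (G.mul_mem (G.mul_mem (G.mul_mem (G.mul_mem (G.mul_mem hMX hMY) hMX) hMZ) hMY) hMX), by simp only [Units.val_mul, hXv, hYv, hZv, toMat_mul]; exact congrArg toMat (by decide)⟩

lemma wlem30 : ∃ g : GL (Fin 6) ℤ, g ∈ G ∧ g.val = toMat (![1,3,5,0,2,4], ![-1,1,1,-1,-1,-1]) :=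
  ⟨(MX*MY*MZ*MX*MY*MX), (G.mul_mem (G.mul_mem (G.mul_mem (G.mul_mem (G.mul_mem hMX hMY) hMZ) hMX) hMY) hMX), by simp only [Units.val_mul, hXv, hYv, hZv, toMat_mul]; exact congrArg toMat (by decide)⟩

lemma wlem31 : ∃ g : GL (Fin 6) ℤ, g ∈ G ∧ g.val = toMat (![3,0,4,1,5,2], ![1,-1,1,-1,-1,-1]) :=
  ⟨(MX*MY*MZ*MY*MX*MZ), (G.mul_mem (G.mul_mem (G.mul_mem (G.mul_mem (G.mul_mem hMX hMY) hMZ) hMY) hMX) hMZ), by simp only [Units.val_mul, hXv, hYv, hZv, toMat_mul]; exact congrArg toMat (by decide)⟩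

lemma wlem32 : ∃ g : GL (Fin 6) ℤ, g ∈ G ∧ g.val = toMat (![3,5,1,4,0,2], ![-1,-1,-1,-1,1,1]) :=
  ⟨(MX*MZ*MX*MY*MX*MZ), (G.mul_mem (G.mul_mem (G.mul_mem (G.mul_mem (G.mul_mem hMX hMZ) hMX) hMY) hMX) hMZ), by simp only [Units.val_mul, hXv, hYv, hZv, toMat_mul]; exact congrArg toMat (by decide)⟩

lemma wlem33 : ∃ g : GL (Fin 6) ℤ, g ∈ G ∧ g.val = toMat (![1,3,5,0,2,4], ![-1,-1,-1,1,1,-1]) :=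
  ⟨(MX*MZ*MX*MY*MZ*MX), (G.mul_mem (G.mul_mem (G.mul_mem (G.mul_mem (G.mul_mem hMX hMZ) hMX) hMY) hMZ) hMX), by simp only [Units.val_mul, hXv, hYv, hZv, toMat_mul]; exact congrArg toMat (by decide)⟩

lemma wlem34 : ∃ g : GL (Fin 6) ℤ, g ∈ G ∧ g.val = toMat (![2,5,4,1,0,3], ![-1,1,1,-1,-1,-1]) :=
  ⟨(MY*MX*MZ*MX*MY*MX), (G.mul_mem (G.mul_mem (G.mul_mem (G.mul_mem (G.mul_mem hMY hMX) hMZ) hMX) hMY) hMX), by simp only [Units.val_mul, hXv, hYv, hZv, toMat_mul]; exact congrArg toMat (by decide)⟩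

lemma wlem35 : ∃ g : GL (Fin 6) ℤ, g ∈ G ∧ g.val = toMat (![4,3,0,5,2,1], ![1,1,-1,-1,-1,-1]) :=
  ⟨(MY*MX*MZ*MX*MY*MZ), (G.mul_mem (G.mul_mem (G.mul_mem (G.mul_mem (G.mul_mem hMY hMX) hMZ) hMX) hMY) hMZ), by simp only [Units.val_mul, hXv, hYv, hZv, toMat_mul]; exact congrArg toMat (by decide)⟩

lemma wlem36 : ∃ g : GL (Fin 6) ℤ, g ∈ G ∧ g.val = toMat (![4,2,5,0,3,1], ![-1,-1,-1,1,-1,1]) :=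
  ⟨(MY*MZ*MX*MY*MX*MZ), (G.mul_mem (G.mul_mem (G.mul_mem (G.mul_mem (G.mul_mem hMY hMZ) hMX) hMY) hMX) hMZ), by simp only [Units.val_mul, hXv, hYv, hZv, toMat_mul]; exact congrArg toMat (by decide)⟩

lemma wlem37 : ∃ g : GL (Fin 6) ℤ, g ∈ G ∧ g.val = toMat (![2,5,4,1,0,3], ![-1,-1,-1,1,1,-1]) :=
  ⟨(MY*MZ*MY*MX*MZ*MY), (G.mul_mem (G.mul_mem (G.mul_mem (G.mul_mem (G.mul_mem hMY hMZ) hMY) hMX) hMZ) hMY), by simp only [Units.val_mul, hXv, hYv, hZv, toMat_mul]; exact congrArg toMat (by decide)⟩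

lemma wlem38 : ∃ g : GL (Fin 6) ℤ, g ∈ G ∧ g.val = toMat (![4,2,5,0,3,1], ![1,-1,1,-1,-1,-1]) :=
  ⟨(MZ*MX*MY*MX*MZ*MX), (G.mul_mem (G.mul_mem (G.mul_mem (G.mul_mem (G.mul_mem hMZ hMX) hMY) hMX) hMZ) hMX), by simp only [Units.val_mul, hXv, hYv, hZv, toMat_mul]; exact congrArg toMat (by decide)⟩

lemma wlem39 : ∃ g : GL (Fin 6) ℤ, g ∈ G ∧ g.val = toMat (![3,5,1,4,0,2], ![1,1,-1,-1,-1,-1]) :=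
  ⟨(MZ*MX*MY*MX*MZ*MY), (G.mul_mem (G.mul_mem (G.mul_mem (G.mul_mem (G.mul_mem hMZ hMX) hMY) hMX) hMZ) hMY), by simp only [Units.val_mul, hXv, hYv, hZv, toMat_mul]; exact congrArg toMat (by decide)⟩

lemma wlem40 : ∃ g : GL (Fin 6) ℤ, g ∈ G ∧ g.val = toMat (![2,5,4,1,0,3], ![1,-1,1,-1,1,1]) :=
  ⟨(MX*MY*MX*MZ*MX*MY*MZ*MX), (G.mul_mem (G.mul_mem (G.mul_mem (G.mul_mem (G.mul_mem (G.mul_mem (G.mul_mem hMX hMY) hMX) hMZ) hMX) hMY) hMZ) hMX), by simp only [Units.val_mul, hXv, hYv, hZv, toMat_mul]; exact congrArg toMat (by decide)⟩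

lemma wlem41 : ∃ g : GL (Fin 6) ℤ, g ∈ G ∧ g.val = toMat (![1,3,5,0,2,4], ![1,1,-1,1,-1,1]) :=
  ⟨(MX*MY*MX*MZ*MY*MX*MZ*MY), (G.mul_mem (G.mul_mem (G.mul_mem (G.mul_mem (G.mul_mem (G.mul_mem (G.mul_mem hMX hMY) hMX) hMZ) hMY) hMX) hMZ) hMY), by simp only [Units.val_mul, hXv, hYv, hZv, toMat_mul]; exact congrArg toMat (by decide)⟩

lemma wlem42 : ∃ g : GL (Fin 6) ℤ, g ∈ G ∧ g.val = toMat (![3,5,1,4,0,2], ![-1,1,1,1,-1,1]) :=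
  ⟨(MX*MY*MZ*MX*MY*MX*MZ*MX), (G.mul_mem (G.mul_mem (G.mul_mem (G.mul_mem (G.mul_mem (G.mul_mem (G.mul_mem hMX hMY) hMZ) hMX) hMY) hMX) hMZ) hMX), by simp only [Units.val_mul, hXv, hYv, hZv, toMat_mul]; exact congrArg toMat (by decide)⟩

lemma wlem43 : ∃ g : GL (Fin 6) ℤ, g ∈ G ∧ g.val = toMat (![1,2,0,5,3,4], ![1,1,1,1,1,1]) :=
  ⟨(MX*MY*MZ*MX*MY*MZ*MX*MY), (G.mul_mem (G.mul_mem (G.mul_mem (G.mul_mem (G.mul_mem (G.mul_mem (G.mul_mem hMX hMY) hMZ) hMX) hMY) hMZ) hMX) hMY), by simp only [Units.val_mul, hXv, hYv, hZv, toMat_mul]; exact congrArg toMat (by decide)⟩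

lemma wlem44 : ∃ g : GL (Fin 6) ℤ, g ∈ G ∧ g.val = toMat (![4,3,0,5,2,1], ![1,-1,1,1,1,-1]) :=
  ⟨(MX*MY*MZ*MY*MX*MZ*MY*MX), (G.mul_mem (G.mul_mem (G.mul_mem (G.mul_mem (G.mul_mem (G.mul_mem (G.mul_mem hMX hMY) hMZ) hMY) hMX) hMZ) hMY) hMX), by simp only [Units.val_mul, hXv, hYv, hZv, toMat_mul]; exact congrArg toMat (by decide)⟩

lemma wlem45 : ∃ g : GL (Fin 6) ℤ, g ∈ G ∧ g.val = toMat (![4,2,5,0,3,1], ![-1,1,1,-1,1,1]) :=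
  ⟨(MX*MZ*MX*MY*MX*MZ*MY*MX), (G.mul_mem (G.mul_mem (G.mul_mem (G.mul_mem (G.mul_mem (G.mul_mem (G.mul_mem hMX hMZ) hMX) hMY) hMX) hMZ) hMY) hMX), by simp only [Units.val_mul, hXv, hYv, hZv, toMat_mul]; exact congrArg toMat (by decide)⟩

lemma wlem46 : ∃ g : GL (Fin 6) ℤ, g ∈ G ∧ g.val = toMat (![3,0,4,1,5,2], ![1,1,-1,1,1,-1]) :=
  ⟨(MX*MZ*MX*MY*MZ*MX*MY*MZ), (G.mul_mem (G.mul_mem (G.mul_mem (G.mul_mem (G.mul_mem (G.mul_mem (G.mul_mem hMX hMZ) hMX) hMY) hMZ) hMX) hMY) hMZ), by simp only [Units.val_mul, hXv, hYv, hZv, toMat_mul]; exact congrArg toMat (by decide)⟩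

lemma wlem47 : ∃ g : GL (Fin 6) ℤ, g ∈ G ∧ g.val = toMat (![2,0,1,4,5,3], ![1,1,1,1,1,1]) :=
  ⟨(MX*MZ*MY*MX*MZ*MY*MX*MZ), (G.mul_mem (G.mul_mem (G.mul_mem (G.mul_mem (G.mul_mem (G.mul_mem (G.mul_mem hMX hMZ) hMY) hMX) hMZ) hMY) hMX) hMZ), by simp only [Units.val_mul, hXv, hYv, hZv, toMat_mul]; exact congrArg toMat (by decide)⟩

lemma wlem48 : ∃ g : GL (Fin 6) ℤ, g ∈ G ∧ g.val = toMat (![0,4,3,2,1,5], ![-1,-1,-1,1,1,-1]) :=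
  ⟨(MX*MY*MX*MZ), (G.mul_mem (G.mul_mem (G.mul_mem hMX hMY) hMX) hMZ), by simp only [Units.val_mul, hXv, hYv, hZv, toMat_mul]; exact congrArg toMat (by decide)⟩

lemma wlem49 : ∃ g : GL (Fin 6) ℤ, g ∈ G ∧ g.val = toMat (![5,4,2,3,1,0], ![1,1,-1,-1,-1,-1]) :=
  ⟨(MX*MY*MZ*MY), (G.mul_mem (G.mul_mem (G.mul_mem hMX hMY) hMZ) hMY), by simp only [Units.val_mul, hXv, hYv, hZv, toMat_mul]; exact congrArg toMat (by decide)⟩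

lemma wlem50 : ∃ g : GL (Fin 6) ℤ, g ∈ G ∧ g.val = toMat (![5,1,3,2,4,0], ![-1,-1,-1,1,-1,1]) :=
  ⟨(MX*MZ*MX*MY), (G.mul_mem (G.mul_mem (G.mul_mem hMX hMZ) hMX) hMY), by simp only [Units.val_mul, hXv, hYv, hZv, toMat_mul]; exact congrArg toMat (by decide)⟩

lemma wlem51 : ∃ g : GL (Fin 6) ℤ, g ∈ G ∧ g.val = toMat (![5,1,3,2,4,0], ![1,-1,1,-1,-1,-1]) :=
  ⟨(MY*MX*MZ*MX), (G.mul_mem (G.mul_mem (G.mul_mem hMY hMX) hMZ) hMX), by simp only [Units.val_mul, hXv, hYv, hZv, toMat_mul]; exact congrArg toMat (by decide)⟩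

lemma wlem52 : ∃ g : GL (Fin 6) ℤ, g ∈ G ∧ g.val = toMat (![5,4,2,3,1,0], ![-1,-1,-1,-1,1,1]) :=
  ⟨(MY*MZ*MY*MX), (G.mul_mem (G.mul_mem (G.mul_mem hMY hMZ) hMY) hMX), by simp only [Units.val_mul, hXv, hYv, hZv, toMat_mul]; exact congrArg toMat (by decide)⟩

lemma wlem53 : ∃ g : GL (Fin 6) ℤ, g ∈ G ∧ g.val = toMat (![0,4,3,2,1,5], ![-1,1,1,-1,-1,-1]) :=
  ⟨(MZ*MX*MY*MX), (G.mul_mem (G.mul_mem (G.mul_mem hMZ hMX) hMY) hMX), by simp only [Units.val_mul, hXv, hYv, hZv, toMat_mul]; exact congrArg toMat (by decide)⟩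

lemma wlem54 : ∃ g : GL (Fin 6) ℤ, g ∈ G ∧ g.val = toMat (![5,1,3,2,4,0], ![-1,1,1,-1,1,1]) :=
  ⟨(MX*MY*MZ*MX*MY*MZ), (G.mul_mem (G.mul_mem (G.mul_mem (G.mul_mem (G.mul_mem hMX hMY) hMZ) hMX) hMY) hMZ), by simp only [Units.val_mul, hXv, hYv, hZv, toMat_mul]; exact congrArg toMat (by decide)⟩

lemma wlem55 : ∃ g : GL (Fin 6) ℤ, g ∈ G ∧ g.val = toMat (![0,4,3,2,1,5], ![1,-1,1,-1,1,1]) :=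
  ⟨(MX*MZ*MY*MX*MZ*MY), (G.mul_mem (G.mul_mem (G.mul_mem (G.mul_mem (G.mul_mem hMX hMZ) hMY) hMX) hMZ) hMY), by simp only [Units.val_mul, hXv, hYv, hZv, toMat_mul]; exact congrArg toMat (by decide)⟩

lemma wlem56 : ∃ g : GL (Fin 6) ℤ, g ∈ G ∧ g.val = toMat (![5,4,2,3,1,0], ![-1,1,1,1,-1,1]) :=
  ⟨(MY*MX*MZ*MY*MX*MZ), (G.mul_mem (G.mul_mem (G.mul_mem (G.mul_mem (G.mul_mem hMY hMX) hMZ) hMY) hMX) hMZ), by simp only [Units.val_mul, hXv, hYv, hZv, toMat_mul]; exact congrArg toMat (by decide)⟩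

lemma wlem57 : ∃ g : GL (Fin 6) ℤ, g ∈ G ∧ g.val = toMat (![0,4,3,2,1,5], ![1,1,-1,1,-1,1]) :=
  ⟨(MY*MZ*MX*MY*MZ*MX), (G.mul_mem (G.mul_mem (G.mul_mem (G.mul_mem (G.mul_mem hMY hMZ) hMX) hMY) hMZ) hMX), by simp only [Units.val_mul, hXv, hYv, hZv, toMat_mul]; exact congrArg toMat (by decide)⟩

lemma wlem58 : ∃ g : GL (Fin 6) ℤ, g ∈ G ∧ g.val = toMat (![5,4,2,3,1,0], ![1,-1,1,1,1,-1]) :=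
  ⟨(MZ*MX*MY*MZ*MX*MY), (G.mul_mem (G.mul_mem (G.mul_mem (G.mul_mem (G.mul_mem hMZ hMX) hMY) hMZ) hMX) hMY), by simp only [Units.val_mul, hXv, hYv, hZv, toMat_mul]; exact congrArg toMat (by decide)⟩

lemma wlem59 : ∃ g : GL (Fin 6) ℤ, g ∈ G ∧ g.val = toMat (![5,1,3,2,4,0], ![1,1,-1,1,1,-1]) :=
  ⟨(MZ*MY*MX*MZ*MY*MX), (G.mul_mem (G.mul_mem (G.mul_mem (G.mul_mem (G.mul_mem hMZ hMY) hMX) hMZ) hMY) hMX), by simp only [Units.val_mul, hXv, hYv, hZv, toMat_mul]; exact congrArg toMat (by decide)⟩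

lemma wlem60 : ∃ g : GL (Fin 6) ℤ, g ∈ G ∧ g.val = toMat (![2,1,0,5,4,3], ![1,1,-1,1,-1,-1]) :=
  ⟨(MX*MY*MX*MZ*MX*MY*MZ), (G.mul_mem (G.mul_mem (G.mul_mem (G.mul_mem (G.mul_mem (G.mul_mem hMX hMY) hMX) hMZ) hMX) hMY) hMZ), by simp only [Units.val_mul, hXv, hYv, hZv, toMat_mul]; exact congrArg toMat (by decide)⟩

lemma wlem61 : ∃ g : GL (Fin 6) ℤ, g ∈ G ∧ g.val = toMat (![1,0,2,3,5,4], ![1,-1,1,-1,1,-1]) :=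
  ⟨(MX*MY*MX*MZ*MY*MX*MZ), (G.mul_mem (G.mul_mem (G.mul_mem (G.mul_mem (G.mul_mem (G.mul_mem hMX hMY) hMX) hMZ) hMY) hMX) hMZ), by simp only [Units.val_mul, hXv, hYv, hZv, toMat_mul]; exact congrArg toMat (by decide)⟩

lemma wlem62 : ∃ g : GL (Fin 6) ℤ, g ∈ G ∧ g.val = toMat (![3,1,5,0,4,2], ![1,-1,-1,-1,1,1]) :=
  ⟨(MX*MY*MZ*MX*MY*MX*MZ), (G.mul_mem (G.mul_mem (G.mul_mem (G.mul_mem (G.mul_mem (G.mul_mem hMX hMY) hMZ) hMX) hMY) hMX) hMZ), by simp only [Units.val_mul, hXv, hYv, hZv, toMat_mul]; exact congrArg toMat (by decide)⟩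

lemma wlem63 : ∃ g : GL (Fin 6) ℤ, g ∈ G ∧ g.val = toMat (![0,3,4,1,2,5], ![-1,1,-1,-1,1,1]) :=
  ⟨(MX*MY*MZ*MY*MX*MZ*MY), (G.mul_mem (G.mul_mem (G.mul_mem (G.mul_mem (G.mul_mem (G.mul_mem hMX hMY) hMZ) hMY) hMX) hMZ) hMY), by simp only [Units.val_mul, hXv, hYv, hZv, toMat_mul]; exact congrArg toMat (by decide)⟩

lemma wlem64 : ∃ g : GL (Fin 6) ℤ, g ∈ G ∧ g.val = toMat (![0,2,1,4,3,5], ![1,1,-1,1,-1,-1]) :=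
  ⟨(MX*MZ*MX*MY*MX*MZ*MY), (G.mul_mem (G.mul_mem (G.mul_mem (G.mul_mem (G.mul_mem (G.mul_mem hMX hMZ) hMX) hMY) hMX) hMZ) hMY), by simp only [Units.val_mul, hXv, hYv, hZv, toMat_mul]; exact congrArg toMat (by decide)⟩

lemma wlem65 : ∃ g : GL (Fin 6) ℤ, g ∈ G ∧ g.val = toMat (![1,0,2,3,5,4], ![-1,1,1,-1,-1,1]) :=
  ⟨(MX*MZ*MX*MY*MZ*MX*MY), (G.mul_mem (G.mul_mem (G.mul_mem (G.mul_mem (G.mul_mem (G.mul_mem hMX hMZ) hMX) hMY) hMZ) hMX) hMY), by simp only [Units.val_mul, hXv, hYv, hZv, toMat_mul]; exact congrArg toMat (by decide)⟩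

lemma wlem66 : ∃ g : GL (Fin 6) ℤ, g ∈ G ∧ g.val = toMat (![4,5,2,3,0,1], ![1,-1,-1,1,-1,1]) :=
  ⟨(MY*MX*MZ*MX*MY*MX*MZ), (G.mul_mem (G.mul_mem (G.mul_mem (G.mul_mem (G.mul_mem (G.mul_mem hMY hMX) hMZ) hMX) hMY) hMX) hMZ), by simp only [Units.val_mul, hXv, hYv, hZv, toMat_mul]; exact congrArg toMat (by decide)⟩

lemma wlem67 : ∃ g : GL (Fin 6) ℤ, g ∈ G ∧ g.val = toMat (![0,3,4,1,2,5], ![-1,-1,1,1,-1,1]) :=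
  ⟨(MY*MX*MZ*MX*MY*MZ*MX), (G.mul_mem (G.mul_mem (G.mul_mem (G.mul_mem (G.mul_mem (G.mul_mem hMY hMX) hMZ) hMX) hMY) hMZ) hMX), by simp only [Units.val_mul, hXv, hYv, hZv, toMat_mul]; exact congrArg toMat (by decide)⟩

lemma wlem68 : ∃ g : GL (Fin 6) ℤ, g ∈ G ∧ g.val = toMat (![0,2,1,4,3,5], ![1,-1,1,-1,1,-1]) :=
  ⟨(MY*MZ*MX*MY*MX*MZ*MX), (G.mul_mem (G.mul_mem (G.mul_mem (G.mul_mem (G.mul_mem (G.mul_mem hMY hMZ) hMX) hMY) hMX) hMZ) hMX), by simp only [Units.val_mul, hXv, hYv, hZv, toMat_mul]; exact congrArg toMat (by decide)⟩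

lemma wlem69 : ∃ g : GL (Fin 6) ℤ, g ∈ G ∧ g.val = toMat (![2,1,0,5,4,3], ![-1,1,1,-1,-1,1]) :=
  ⟨(MY*MZ*MY*MX*MZ*MY*MX), (G.mul_mem (G.mul_mem (G.mul_mem (G.mul_mem (G.mul_mem (G.mul_mem hMY hMZ) hMY) hMX) hMZ) hMY) hMX), by simp only [Units.val_mul, hXv, hYv, hZv, toMat_mul]; exact congrArg toMat (by decide)⟩

lemma wlem70 : ∃ g : GL (Fin 6) ℤ, g ∈ G ∧ g.val = toMat (![4,5,2,3,0,1], ![-1,1,-1,1,1,-1]) :=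
  ⟨(MZ*MX*MY*MX*MZ*MX*MY), (G.mul_mem (G.mul_mem (G.mul_mem (G.mul_mem (G.mul_mem (G.mul_mem hMZ hMX) hMY) hMX) hMZ) hMX) hMY), by simp only [Units.val_mul, hXv, hYv, hZv, toMat_mul]; exact congrArg toMat (by decide)⟩

lemma wlem71 : ∃ g : GL (Fin 6) ℤ, g ∈ G ∧ g.val = toMat (![3,1,5,0,4,2], ![-1,-1,1,1,1,-1]) :=
  ⟨(MZ*MX*MY*MX*MZ*MY*MX), (G.mul_mem (G.mul_mem (G.mul_mem (G.mul_mem (G.mul_mem (G.mul_mem hMZ hMX) hMY) hMX) hMZ) hMY) hMX), by simp only [Units.val_mul, hXv, hYv, hZv, toMat_mul]; exact congrArg toMat (by decide)⟩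

lemma wlem72 : ∃ g : GL (Fin 6) ℤ, g ∈ G ∧ g.val = toMat (![2,4,5,0,1,3], ![-1,-1,1,1,-1,1]) :=
  ⟨(MX*MY*MZ), (G.mul_mem (G.mul_mem hMX hMY) hMZ), by simp only [Units.val_mul, hXv, hYv, hZv, toMat_mul]; exact congrArg toMat (by decide)⟩

lemma wlem73 : ∃ g : GL (Fin 6) ℤ, g ∈ G ∧ g.val = toMat (![5,2,4,1,3,0], ![-1,-1,1,1,1,-1]) :=
  ⟨(MX*MZ*MY), (G.mul_mem (G.mul_mem hMX hMZ) hMY), by simp only [Units.val_mul, hXv, hYv, hZv, toMat_mul]; exact congrArg toMat (by decide)⟩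

lemma wlem74 : ∃ g : GL (Fin 6) ℤ, g ∈ G ∧ g.val = toMat (![1,5,3,2,0,4], ![-1,1,-1,-1,1,1]) :=
  ⟨(MY*MX*MZ), (G.mul_mem (G.mul_mem hMY hMX) hMZ), by simp only [Units.val_mul, hXv, hYv, hZv, toMat_mul]; exact congrArg toMat (by decide)⟩

lemma wlem75 : ∃ g : GL (Fin 6) ℤ, g ∈ G ∧ g.val = toMat (![5,3,1,4,2,0], ![-1,1,-1,1,1,-1]) :=
  ⟨(MY*MZ*MX), (G.mul_mem (G.mul_mem hMY hMZ) hMX), by simp only [Units.val_mul, hXv, hYv, hZv, toMat_mul]; exact congrArg toMat (by decide)⟩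

lemma wlem76 : ∃ g : GL (Fin 6) ℤ, g ∈ G ∧ g.val = toMat (![4,0,3,2,5,1], ![1,-1,-1,-1,1,1]) :=
  ⟨(MZ*MX*MY), (G.mul_mem (G.mul_mem hMZ hMX) hMY), by simp only [Units.val_mul, hXv, hYv, hZv, toMat_mul]; exact congrArg toMat (by decide)⟩

lemma wlem77 : ∃ g : GL (Fin 6) ℤ, g ∈ G ∧ g.val = toMat (![3,4,0,5,1,2], ![1,-1,-1,1,-1,1]) :=
  ⟨(MZ*MY*MX), (G.mul_mem (G.mul_mem hMZ hMY) hMX), by simp only [Units.val_mul, hXv, hYv, hZv, toMat_mul]; exact congrArg toMat (by decide)⟩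

lemma wlem78 : ∃ g : GL (Fin 6) ℤ, g ∈ G ∧ g.val = toMat (![4,0,3,2,5,1], ![1,1,1,1,-1,1]) :=
  ⟨(MX*MY*MX*MZ*MX), (G.mul_mem (G.mul_mem (G.mul_mem (G.mul_mem hMX hMY) hMX) hMZ) hMX), by simp only [Units.val_mul, hXv, hYv, hZv, toMat_mul]; exact congrArg toMat (by decide)⟩

lemma wlem79 : ∃ g : GL (Fin 6) ℤ, g ∈ G ∧ g.val = toMat (![3,4,0,5,1,2], ![1,1,1,-1,1,1]) :=
  ⟨(MX*MY*MX*MZ*MY), (G.mul_mem (G.mul_mem (G.mul_mem (G.mul_mem hMX hMY) hMX) hMZ) hMY), by simp only [Units.val_mul, hXv, hYv, hZv, toMat_mul]; exact congrArg toMat (by decide)⟩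

lemma wlem80 : ∃ g : GL (Fin 6) ℤ, g ∈ G ∧ g.val = toMat (![5,3,1,4,2,0], ![1,-1,-1,1,-1,1]) :=
  ⟨(MX*MY*MZ*MX*MY), (G.mul_mem (G.mul_mem (G.mul_mem (G.mul_mem hMX hMY) hMZ) hMX) hMY), by simp only [Units.val_mul, hXv, hYv, hZv, toMat_mul]; exact congrArg toMat (by decide)⟩

lemma wlem81 : ∃ g : GL (Fin 6) ℤ, g ∈ G ∧ g.val = toMat (![1,5,3,2,0,4], ![1,1,1,1,1,-1]) :=
  ⟨(MX*MZ*MX*MY*MX), (G.mul_mem (G.mul_mem (G.mul_mem (G.mul_mem hMX hMZ) hMX) hMY) hMX), by simp only [Units.val_mul, hXv, hYv, hZv, toMat_mul]; exact congrArg toMat (by decide)⟩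

lemma wlem82 : ∃ g : GL (Fin 6) ℤ, g ∈ G ∧ g.val = toMat (![5,3,1,4,2,0], ![1,1,1,-1,1,1]) :=
  ⟨(MX*MZ*MX*MY*MZ), (G.mul_mem (G.mul_mem (G.mul_mem (G.mul_mem hMX hMZ) hMX) hMY) hMZ), by simp only [Units.val_mul, hXv, hYv, hZv, toMat_mul]; exact congrArg toMat (by decide)⟩

lemma wlem83 : ∃ g : GL (Fin 6) ℤ, g ∈ G ∧ g.val = toMat (![3,4,0,5,1,2], ![-1,1,-1,1,1,-1]) :=
  ⟨(MX*MZ*MY*MX*MZ), (G.mul_mem (G.mul_mem (G.mul_mem (G.mul_mem hMX hMZ) hMY) hMX) hMZ), by simp only [Units.val_mul, hXv, hYv, hZv, toMat_mul]; exact congrArg toMat (by decide)⟩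

lemma wlem84 : ∃ g : GL (Fin 6) ℤ, g ∈ G ∧ g.val = toMat (![5,2,4,1,3,0], ![1,-1,-1,-1,1,1]) :=
  ⟨(MY*MX*MZ*MY*MX), (G.mul_mem (G.mul_mem (G.mul_mem (G.mul_mem hMY hMX) hMZ) hMY) hMX), by simp only [Units.val_mul, hXv, hYv, hZv, toMat_mul]; exact congrArg toMat (by decide)⟩

lemma wlem85 : ∃ g : GL (Fin 6) ℤ, g ∈ G ∧ g.val = toMat (![2,4,5,0,1,3], ![1,1,1,1,1,-1]) :=
  ⟨(MY*MZ*MX*MY*MX), (G.mul_mem (G.mul_mem (G.mul_mem (G.mul_mem hMY hMZ) hMX) hMY) hMX), by simp only [Units.val_mul, hXv, hYv, hZv, toMat_mul]; exact congrArg toMat (by decide)⟩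

lemma wlem86 : ∃ g : GL (Fin 6) ℤ, g ∈ G ∧ g.val = toMat (![4,0,3,2,5,1], ![-1,-1,1,1,1,-1]) :=
  ⟨(MY*MZ*MX*MY*MZ), (G.mul_mem (G.mul_mem (G.mul_mem (G.mul_mem hMY hMZ) hMX) hMY) hMZ), by simp only [Units.val_mul, hXv, hYv, hZv, toMat_mul]; exact congrArg toMat (by decide)⟩

lemma wlem87 : ∃ g : GL (Fin 6) ℤ, g ∈ G ∧ g.val = toMat (![5,2,4,1,3,0], ![1,1,1,1,-1,1]) :=
  ⟨(MY*MZ*MY*MX*MZ), (G.mul_mem (G.mul_mem (G.mul_mem (G.mul_mem hMY hMZ) hMY) hMX) hMZ), by simp only [Units.val_mul, hXv, hYv, hZv, toMat_mul]; exact congrArg toMat (by decide)⟩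

lemma wlem88 : ∃ g : GL (Fin 6) ℤ, g ∈ G ∧ g.val = toMat (![2,4,5,0,1,3], ![-1,1,-1,-1,1,1]) :=
  ⟨(MZ*MX*MY*MZ*MX), (G.mul_mem (G.mul_mem (G.mul_mem (G.mul_mem hMZ hMX) hMY) hMZ) hMX), by simp only [Units.val_mul, hXv, hYv, hZv, toMat_mul]; exact congrArg toMat (by decide)⟩

lemma wlem89 : ∃ g : GL (Fin 6) ℤ, g ∈ G ∧ g.val = toMat (![1,5,3,2,0,4], ![-1,-1,1,1,-1,1]) :=
  ⟨(MZ*MY*MX*MZ*MY), (G.mul_mem (G.mul_mem (G.mul_mem (G.mul_mem hMZ hMY) hMX) hMZ) hMY), by simp only [Units.val_mul, hXv, hYv, hZv, toMat_mul]; exact congrArg toMat (by decide)⟩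

lemma wlem90 : ∃ g : GL (Fin 6) ℤ, g ∈ G ∧ g.val = toMat (![1,5,3,2,0,4], ![1,-1,-1,-1,-1,-1]) :=
  ⟨(MX*MY*MZ*MX*MY*MZ*MX), (G.mul_mem (G.mul_mem (G.mul_mem (G.mul_mem (G.mul_mem (G.mul_mem hMX hMY) hMZ) hMX) hMY) hMZ) hMX), by simp only [Units.val_mul, hXv, hYv, hZv, toMat_mul]; exact congrArg toMat (by decide)⟩

lemma wlem91 : ∃ g : GL (Fin 6) ℤ, g ∈ G ∧ g.val = toMat (![4,0,3,2,5,1], ![-1,1,-1,-1,-1,-1]) :=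
  ⟨(MX*MZ*MY*MX*MZ*MY*MX), (G.mul_mem (G.mul_mem (G.mul_mem (G.mul_mem (G.mul_mem (G.mul_mem hMX hMZ) hMY) hMX) hMZ) hMY) hMX), by simp only [Units.val_mul, hXv, hYv, hZv, toMat_mul]; exact congrArg toMat (by decide)⟩

lemma wlem92 : ∃ g : GL (Fin 6) ℤ, g ∈ G ∧ g.val = toMat (![2,4,5,0,1,3], ![1,-1,-1,-1,-1,-1]) :=
  ⟨(MY*MX*MZ*MY*MX*MZ*MY), (G.mul_mem (G.mul_mem (G.mul_mem (G.mul_mem (G.mul_mem (G.mul_mem hMY hMX) hMZ) hMY) hMX) hMZ) hMY), by simp only [Units.val_mul, hXv, hYv, hZv, toMat_mul]; exact congrArg toMat (by decide)⟩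

lemma wlem93 : ∃ g : GL (Fin 6) ℤ, g ∈ G ∧ g.val = toMat (![3,4,0,5,1,2], ![-1,-1,1,-1,-1,-1]) :=
  ⟨(MY*MZ*MX*MY*MZ*MX*MY), (G.mul_mem (G.mul_mem (G.mul_mem (G.mul_mem (G.mul_mem (G.mul_mem hMY hMZ) hMX) hMY) hMZ) hMX) hMY), by simp only [Units.val_mul, hXv, hYv, hZv, toMat_mul]; exact congrArg toMat (by decide)⟩

lemma wlem94 : ∃ g : GL (Fin 6) ℤ, g ∈ G ∧ g.val = toMat (![5,2,4,1,3,0], ![-1,1,-1,-1,-1,-1]) :=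
  ⟨(MZ*MX*MY*MZ*MX*MY*MZ), (G.mul_mem (G.mul_mem (G.mul_mem (G.mul_mem (G.mul_mem (G.mul_mem hMZ hMX) hMY) hMZ) hMX) hMY) hMZ), by simp only [Units.val_mul, hXv, hYv, hZv, toMat_mul]; exact congrArg toMat (by decide)⟩

lemma wlem95 : ∃ g : GL (Fin 6) ℤ, g ∈ G ∧ g.val = toMat (![5,3,1,4,2,0], ![-1,-1,1,-1,-1,-1]) :=
  ⟨(MZ*MY*MX*MZ*MY*MX*MZ), (G.mul_mem (G.mul_mem (G.mul_mem (G.mul_mem (G.mul_mem (G.mul_mem hMZ hMY) hMX) hMZ) hMY) hMX) hMZ), by simp only [Units.val_mul, hXv, hYv, hZv, toMat_mul]; exact congrArg toMat (by decide)⟩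

lemma dback : ∀ a ∈ LSP, ∃ g : GL (Fin 6) ℤ, g ∈ G ∧ g.val = toMat a := by
  intro a ha
  simp only [LSP, LSP1, LSP2, LSP3, LSP4, LSP8, List.mem_append, List.mem_cons,
    List.not_mem_nil, or_false, or_assoc] at ha
  rcases ha with rfl|rfl|rfl|rfl|rfl|rfl|rfl|rfl|rfl|rfl|rfl|rfl|rfl|rfl|rfl|rfl|rfl|rfl|rfl|rfl|rfl|rfl|rfl|rfl|rfl|rfl|rfl|rfl|rfl|rfl|rfl|rfl|rfl|rfl|rfl|rfl|rfl|rfl|rfl|rfl|rfl|rfl|rfl|rfl|rfl|rfl|rfl|rfl|rfl|rfl|rfl|rfl|rfl|rfl|rfl|rfl|rfl|rfl|rfl|rfl|rfl|rfl|rfl|rfl|rfl|rfl|rfl|rfl|rfl|rfl|rfl|rfl|rfl|rfl|rfl|rfl|rfl|rfl|rfl|rfl|rfl|rfl|rfl|rfl|rfl|rfl|rfl|rfl|rfl|rfl|rfl|rfl|rfl|rfl|rfl|rfl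
  exacts [wlem0, wlem1, wlem2, wlem3, wlem4, wlem5, wlem6, wlem7, wlem8, wlem9, wlem10, wlem11, wlem12, wlem13, wlem14, wlem15, wlem16, wlem17, wlem18, wlem19, wlem20, wlem21, wlem22, wlem23, wlem24, wlem25, wlem26, wlem27, wlem28, wlem29, wlem30, wlem31, wlem32, wlem33, wlem34, wlem35, wlem36, wlem37, wlem38, wlem39, wlem40, wlem41, wlem42, wlem43, wlem44, wlem45, wlem46, wlem47, wlem48, wlem49, wlem50, wlem51, wlem52, wlem53, wlem54, wlem55, wlem56, wlem57, wlem58, wlem59, wlem60, wlem61, wlem62, wlem63, wlem64, wlem65, wlem66, wlem67, wlem68, wlem69, wlem70, wlem71, wlem72, wlem73, wlem74, wlem75, wlem76, wlem77, wlem78, wlem79, wlem80, wlem81, wlem82, wlem83, wlem84, wlem85, wlem86, wlem87, wlem88, wlem89, wlem90, wlem91, wlem92, wlem93, wlem94, wlem95]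

set_option maxRecDepth 100000 in
lemma dstep : ∀ a ∈ LSP, spmul spX a ∈ LSP ∧ spmul spY a ∈ LSP ∧ spmul spZ a ∈ LSP := by decide

set_option maxRecDepth 100000 in
lemma dinv : ∀ a ∈ LSP, spmul a (spPow a 23) = spone ∧ spmul (spPow a 23) a = spone := by decide

set_option maxRecDepth 100000 in
lemma dord1 : ∀ a ∈ LSP1, spPow a 1 = spone := by decide
set_option maxRecDepth 100000 in
lemma dord2 : ∀ a ∈ LSP2, spPow a 2 = spone ∧ ∀ m, m < 2 → 0 < m → toMat (spPow a m) ≠ 1 := by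
  decide
set_option maxRecDepth 100000 in
lemma dord3 : ∀ a ∈ LSP3, spPow a 3 = spone ∧ ∀ m, m < 3 → 0 < m → toMat (spPow a m) ≠ 1 := by
  decide
set_option maxRecDepth 100000 in
lemma dord4 : ∀ a ∈ LSP4, spPow a 4 = spone ∧ ∀ m, m < 4 → 0 < m → toMat (spPow a m) ≠ 1 := by
  decide
set_option maxRecDepth 100000 in
lemma dord8 : ∀ a ∈ LSP8, spPow a 8 = spone ∧ ∀ m, m < 8 → 0 < m → toMat (spPow a m) ≠ 1 := by
  decide

lemma ord1 : ∀ a ∈ LSP1, orderOf (toMat a) = 1 := fun a ha =>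
  (orderOf_eq_iff (by norm_num)).2
    ⟨by rw [toMat_pow, dord1 a ha, toMat_one], fun m hm hm' => absurd hm' (by omega)⟩
lemma ord2 : ∀ a ∈ LSP2, orderOf (toMat a) = 2 := fun a ha =>
  (orderOf_eq_iff (by norm_num)).2
    ⟨by rw [toMat_pow, (dord2 a ha).1, toMat_one],
     fun m hm hm' => by rw [toMat_pow]; exact (dord2 a ha).2 m hm hm'⟩
lemma ord3 : ∀ a ∈ LSP3, orderOf (toMat a) = 3 := fun a ha =>
  (orderOf_eq_iff (by norm_num)).2
    ⟨by rw [toMat_pow, (dord3 a ha).1, toMat_one],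
     fun m hm hm' => by rw [toMat_pow]; exact (dord3 a ha).2 m hm hm'⟩
lemma ord4 : ∀ a ∈ LSP4, orderOf (toMat a) = 4 := fun a ha =>
  (orderOf_eq_iff (by norm_num)).2
    ⟨by rw [toMat_pow, (dord4 a ha).1, toMat_one],
     fun m hm hm' => by rw [toMat_pow]; exact (dord4 a ha).2 m hm hm'⟩
lemma ord8 : ∀ a ∈ LSP8, orderOf (toMat a) = 8 := fun a ha =>
  (orderOf_eq_iff (by norm_num)).2
    ⟨by rw [toMat_pow, (dord8 a ha).1, toMat_one],
     fun m hm hm' => by rw [toMat_pow]; exact (dord8 a ha).2 m hm hm'⟩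

lemma mem_decomp : ∀ a ∈ LSP,
    a ∈ LSP1 ∨ a ∈ LSP2 ∨ a ∈ LSP3 ∨ a ∈ LSP4 ∨ a ∈ LSP8 := by
  intro a ha
  simpa [LSP, List.mem_append, or_assoc] using ha

/-- Forward direction: every element of `G` has matrix part of the form `toMat a`, `a ∈ LSP`. -/
lemma memval : ∀ x : GL (Fin 6) ℤ, x ∈ G → ∃ a ∈ LSP, x.val = toMat a := by
  have step : ∀ x : GL (Fin 6) ℤ, x ∈ ({MX, MY, MZ} : Set (GL (Fin 6) ℤ)) →
      ∀ y : GL (Fin 6) ℤ, (∃ a ∈ LSP, y.val = toMat a) →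
      ∃ a ∈ LSP, (x * y).val = toMat a := by
    intro x hx y ⟨a, ha, hva⟩
    simp only [Set.mem_insert_iff, Set.mem_singleton_iff] at hx
    rcases hx with rfl | rfl | rfl
    · exact ⟨spmul spX a, (dstep a ha).1, by rw [Units.val_mul, hXv, hva, toMat_mul]⟩
    · exact ⟨spmul spY a, (dstep a ha).2.1, by rw [Units.val_mul, hYv, hva, toMat_mul]⟩
    · exact ⟨spmul spZ a, (dstep a ha).2.2, by rw [Units.val_mul, hZv, hva, toMat_mul]⟩
  intro x hx
  have hx' : x ∈ Subgroup.closure ({MX, MY, MZ} : Set (GL (Fin 6) ℤ)) := hx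
  induction hx' using Subgroup.closure_induction_left with
  | one =>
    exact ⟨spone, by decide, by rw [Units.val_one, toMat_one]⟩
  | mul_left x hxs y hy ih => exact step x hxs y (ih hy)
  | inv_mul_cancel x hxs y hy ih =>
    have hinv : x⁻¹ = x := by
      simp only [Set.mem_insert_iff, Set.mem_singleton_iff] at hxs
      rcases hxs with rfl | rfl | rfl <;> exact Units.ext rfl
    rw [hinv]
    exact step x hxs y (ih hy)

lemma chain (g : ↥G) :
    orderOf g = orderOf ((g : GL (Fin 6) ℤ) : Matrix (Fin 6) (Fin 6) ℤ) :=
  (orderOf_units.trans (orderOf_injective G.subtype G.subtype_injective g)).symm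

lemma count_aux (k nk : ℕ) (LSPk : List SP)
    (hsub : ∀ a ∈ LSPk, a ∈ LSP)
    (hord : ∀ a ∈ LSPk, orderOf (toMat a) = k)
    (hconv : ∀ a ∈ LSP, orderOf (toMat a) = k → a ∈ LSPk)
    (hcard : ((LSPk.map fun a => (toMat a, toMat (spPow a 23))).toFinset).card = nk) :
    Nat.card {g : G // orderOf g = k} = nk := by
  set F : Finset (Matrix (Fin 6) (Fin 6) ℤ × Matrix (Fin 6) (Fin 6) ℤ) :=
    (LSPk.map fun a => (toMat a, toMat (spPow a 23))).toFinset with hF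
  have hmulinv : ∀ a ∈ LSP, toMat a * toMat (spPow a 23) = 1 ∧
      toMat (spPow a 23) * toMat a = 1 := by
    intro a ha
    constructor
    · rw [toMat_mul, (dinv a ha).1, toMat_one]
    · rw [toMat_mul, (dinv a ha).2, toMat_one]
  have hmem : ∀ g : {g : G // orderOf g = k},
      ((g.1 : GL (Fin 6) ℤ).val, (g.1 : GL (Fin 6) ℤ).inv) ∈ F := by
    intro g
    obtain ⟨a, ha, hva⟩ := memval (g.1 : GL (Fin 6) ℤ) g.1.2
    have hk : orderOf (toMat a) = k := by rw [← hva, ← chain g.1]; exact g.2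
    have hak : a ∈ LSPk := hconv a ha hk
    have hu : (g.1 : GL (Fin 6) ℤ) =
        ⟨toMat a, toMat (spPow a 23), (hmulinv a ha).1, (hmulinv a ha).2⟩ :=
      Units.ext hva
    have hinv : (g.1 : GL (Fin 6) ℤ).inv = toMat (spPow a 23) := congrArg Units.inv hu
    rw [hF, List.mem_toFinset, List.mem_map]
    exact ⟨a, hak, by rw [← hva, ← hinv]⟩
  have hbij : Function.Bijective (fun g : {g : G // orderOf g = k} =>
      (⟨((g.1 : GL (Fin 6) ℤ).val, (g.1 : GL (Fin 6) ℤ).inv), hmem g⟩ : {q // q ∈ F})) := by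
    constructor
    · intro g1 g2 h
      have h1 := congrArg (fun q : {q // q ∈ F} => q.1.1) h
      exact Subtype.ext (Subtype.ext (Units.ext h1))
    · rintro ⟨q, hq⟩
      rw [hF, List.mem_toFinset, List.mem_map] at hq
      obtain ⟨a, hak, rfl⟩ := hq
      have ha : a ∈ LSP := hsub a hak
      have huG : (⟨toMat a, toMat (spPow a 23), (hmulinv a ha).1, (hmulinv a ha).2⟩ :
          GL (Fin 6) ℤ) ∈ G := by
        obtain ⟨g0, hg0, hval⟩ := dback a ha
        rw [show (⟨toMat a, toMat (spPow a 23), (hmulinv a ha).1, (hmulinv a ha).2⟩ :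
          GL (Fin 6) ℤ) = g0 from Units.ext hval.symm]
        exact hg0
      have hordu : orderOf (⟨⟨toMat a, toMat (spPow a 23), (hmulinv a ha).1,
          (hmulinv a ha).2⟩, huG⟩ : G) = k := by
        rw [chain ⟨_, huG⟩]
        exact hord a hak
      exact ⟨⟨⟨_, huG⟩, hordu⟩, Subtype.ext rfl⟩
  rw [Nat.card_congr (Equiv.ofBijective _ hbij), Nat.card_eq_finsetCard, hcard]

lemma conv1 : ∀ a ∈ LSP, orderOf (toMat a) = 1 → a ∈ LSP1 := by
  intro a ha h
  rcases mem_decomp a ha with h1 | h1 | h1 | h1 | h1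
  · exact h1
  · rw [ord2 a h1] at h; exact absurd h (by norm_num)
  · rw [ord3 a h1] at h; exact absurd h (by norm_num)
  · rw [ord4 a h1] at h; exact absurd h (by norm_num)
  · rw [ord8 a h1] at h; exact absurd h (by norm_num)

lemma conv2 : ∀ a ∈ LSP, orderOf (toMat a) = 2 → a ∈ LSP2 := by
  intro a ha h
  rcases mem_decomp a ha with h1 | h1 | h1 | h1 | h1
  · rw [ord1 a h1] at h; exact absurd h (by norm_num)
  · exact h1
  · rw [ord3 a h1] at h; exact absurd h (by norm_num)
  · rw [ord4 a h1] at h; exact absurd h (by norm_num)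
  · rw [ord8 a h1] at h; exact absurd h (by norm_num)

lemma conv3 : ∀ a ∈ LSP, orderOf (toMat a) = 3 → a ∈ LSP3 := by
  intro a ha h
  rcases mem_decomp a ha with h1 | h1 | h1 | h1 | h1
  · rw [ord1 a h1] at h; exact absurd h (by norm_num)
  · rw [ord2 a h1] at h; exact absurd h (by norm_num)
  · exact h1
  · rw [ord4 a h1] at h; exact absurd h (by norm_num)
  · rw [ord8 a h1] at h; exact absurd h (by norm_num)

lemma conv4 : ∀ a ∈ LSP, orderOf (toMat a) = 4 → a ∈ LSP4 := by
  intro a ha h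
  rcases mem_decomp a ha with h1 | h1 | h1 | h1 | h1
  · rw [ord1 a h1] at h; exact absurd h (by norm_num)
  · rw [ord2 a h1] at h; exact absurd h (by norm_num)
  · rw [ord3 a h1] at h; exact absurd h (by norm_num)
  · exact h1
  · rw [ord8 a h1] at h; exact absurd h (by norm_num)

lemma conv8 : ∀ a ∈ LSP, orderOf (toMat a) = 8 → a ∈ LSP8 := by
  intro a ha h
  rcases mem_decomp a ha with h1 | h1 | h1 | h1 | h1
  · rw [ord1 a h1] at h; exact absurd h (by norm_num)
  · rw [ord2 a h1] at h; exact absurd h (by norm_num)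
  · rw [ord3 a h1] at h; exact absurd h (by norm_num)
  · rw [ord4 a h1] at h; exact absurd h (by norm_num)
  · exact h1

set_option maxRecDepth 100000 in
lemma sub1 : ∀ a ∈ LSP1, a ∈ LSP := by decide
set_option maxRecDepth 100000 in
lemma sub2 : ∀ a ∈ LSP2, a ∈ LSP := by decide
set_option maxRecDepth 100000 in
lemma sub3 : ∀ a ∈ LSP3, a ∈ LSP := by decide
set_option maxRecDepth 100000 in
lemma sub4 : ∀ a ∈ LSP4, a ∈ LSP := by decide
set_option maxRecDepth 100000 in
lemma sub8 : ∀ a ∈ LSP8, a ∈ LSP := by decide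

set_option maxRecDepth 100000 in
lemma card1 : ((LSP1.map fun a => (toMat a, toMat (spPow a 23))).toFinset).card = 1 := by decide
set_option maxRecDepth 100000 in
lemma card2 : ((LSP2.map fun a => (toMat a, toMat (spPow a 23))).toFinset).card = 15 := by decide
set_option maxRecDepth 100000 in
lemma card3 : ((LSP3.map fun a => (toMat a, toMat (spPow a 23))).toFinset).card = 32 := by decide
set_option maxRecDepth 100000 in
lemma card4 : ((LSP4.map fun a => (toMat a, toMat (spPow a 23))).toFinset).card = 24 := by decide
set_option maxRecDepth 100000 in
lemma card8 : ((LSP8.map fun a => (toMat a, toMat (spPow a 23))).toFinset).card = 24 := by decide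

/-- `G` contains exactly 1 element of order 1, 15 of order 2, 32 of order 3, 24 of order 4, and
24 of order 8, and no elements of any other order. -/
theorem stmt_15 :
    Nat.card {g : G // orderOf g = 1} = 1 ∧
    Nat.card {g : G // orderOf g = 2} = 15 ∧
    Nat.card {g : G // orderOf g = 3} = 32 ∧
    Nat.card {g : G // orderOf g = 4} = 24 ∧
    Nat.card {g : G // orderOf g = 8} = 24 ∧
    ∀ g : G, orderOf g ∈ ({1, 2, 3, 4, 8} : Set ℕ) := by
  refine ⟨count_aux 1 1 LSP1 sub1 ord1 conv1 card1,
    count_aux 2 15 LSP2 sub2 ord2 conv2 card2,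
    count_aux 3 32 LSP3 sub3 ord3 conv3 card3,
    count_aux 4 24 LSP4 sub4 ord4 conv4 card4,
    count_aux 8 24 LSP8 sub8 ord8 conv8 card8, ?_⟩
  intro g
  obtain ⟨a, ha, hva⟩ := memval (g : GL (Fin 6) ℤ) g.2
  have hord : orderOf g = orderOf (toMat a) := by rw [chain g, hva]
  rcases mem_decomp a ha with h1 | h1 | h1 | h1 | h1
  · rw [hord, ord1 a h1]; simp
  · rw [hord, ord2 a h1]; simp
  · rw [hord, ord3 a h1]; simp
  · rw [hord, ord4 a h1]; simp
  · rw [hord, ord8 a h1]; simp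
end

section
/- Let φ : FreeGroup (Fin 3) → Perm({0,1,2,3}) be the group homomorphism sending, for i = 1,2,3, the generator sᵢ to the transposition (0 i). Then φ is surjective and its kernel is the normal closure of the set of relators {sᵢ² : i}, together with {(sᵢsⱼ)³ : i ≠ j} and {(sᵢsⱼsᵢs_k)² : i, j, k pairwise distinct}; equivalently, the symmetric group S₄ is isomorphic to the presented group with generators s₁, s₂, s₃ and relations sᵢ² = 1, (sᵢsⱼ)³ = 1 for i ≠ j, and (sᵢsⱼsᵢs_k)² = 1 for i, j, k pairwise distinct. -/
/-- The Coxeter-type relators `sᵢ²`, `(sᵢsⱼ)³` for `i ≠ j`, and `(sᵢsⱼsᵢs_k)²` for `i, j, k`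
pairwise distinct, in the free group on three generators. -/
def rels₃ : Set (FreeGroup (Fin 3)) :=
  {w | ∃ i : Fin 3, w = (FreeGroup.of i) ^ 2} ∪
  {w | ∃ i j : Fin 3, i ≠ j ∧ w = (FreeGroup.of i * FreeGroup.of j) ^ 3} ∪
  {w | ∃ i j k : Fin 3, i ≠ j ∧ j ≠ k ∧ i ≠ k ∧
    w = (FreeGroup.of i * FreeGroup.of j * FreeGroup.of i * FreeGroup.of k) ^ 2}

abbrev fgen : Fin 3 → Equiv.Perm (Fin 4) := ![Equiv.swap 0 1, Equiv.swap 0 2, Equiv.swap 0 3]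

lemma hrel : ∀ r ∈ rels₃, FreeGroup.lift fgen r = 1 := by
  rintro r ((⟨i, rfl⟩ | ⟨i, j, hij, rfl⟩) | ⟨i, j, k, h1, h2, h3, rfl⟩) <;>
    simp only [map_pow, map_mul, FreeGroup.lift_apply_of]
  · fin_cases i <;> decide
  · fin_cases i <;> fin_cases j <;> first | (exact absurd rfl hij) | decide
  · fin_cases i <;> fin_cases j <;> fin_cases k <;>
      first | (exact absurd rfl h1) | (exact absurd rfl h2) | (exact absurd rfl h3) | decide


namespace S4P

abbrev G := PresentedGroup rels₃

lemma rel_one {r : FreeGroup (Fin 3)} (hr : r ∈ rels₃) : PresentedGroup.mk rels₃ r = 1 :=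
  (QuotientGroup.eq_one_iff r).mpr (Subgroup.subset_normalClosure hr)

def a : G := .of 0
def b : G := .of 1
def c : G := .of 2

lemma sq (i : Fin 3) : (PresentedGroup.of i : G) ^ 2 = 1 := by
  have h := rel_one (Or.inl (Or.inl ⟨i, rfl⟩))
  rwa [map_pow] at h

lemma pair (i j : Fin 3) (h : i ≠ j) :
    ((PresentedGroup.of i : G) * .of j) ^ 3 = 1 := by
  have h2 := rel_one (Or.inl (Or.inr ⟨i, j, h, rfl⟩))
  rwa [map_pow, map_mul] at h2

lemma trip (i j k : Fin 3) (h1 : i ≠ j) (h2 : j ≠ k) (h3 : i ≠ k) :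
    ((PresentedGroup.of i : G) * .of j * .of i * .of k) ^ 2 = 1 := by
  have h4 := rel_one (Or.inr ⟨i, j, k, h1, h2, h3, rfl⟩)
  rwa [map_pow, map_mul, map_mul, map_mul] at h4

lemma haa : a * a = 1 := by have := sq 0; rwa [pow_two] at this
lemma hbb : b * b = 1 := by have := sq 1; rwa [pow_two] at this
lemma hcc : c * c = 1 := by have := sq 2; rwa [pow_two] at this

lemma cancel {g : G} (h : g * g = 1) (x : G) : g * (g * x) = x := by
  rw [← mul_assoc, h, one_mul]

lemma braid_of {x y : G} (hx : x * x = 1) (hy : y * y = 1) (h : (x * y) ^ 3 = 1) :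
    x * y * x = y * x * y := by
  have hx' : x⁻¹ = x := inv_eq_of_mul_eq_one_left hx
  have hy' : y⁻¹ = y := inv_eq_of_mul_eq_one_left hy
  have h' : x * (y * (x * (y * (x * y)))) = 1 := by
    simpa only [pow_succ, pow_zero, one_mul, mul_assoc] using h
  have h2 : (x * y * x) * (y * x * y) = 1 := by simpa only [mul_assoc] using h'
  rw [eq_inv_of_mul_eq_one_left h2, mul_inv_rev, mul_inv_rev, hx', hy', mul_assoc]

lemma comm_of {w z : G} (hw : w * w = 1) (hz : z * z = 1) (h : (w * z) ^ 2 = 1) :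
    w * z = z * w := by
  rw [pow_two] at h
  rw [eq_inv_of_mul_eq_one_left h, mul_inv_rev, inv_eq_of_mul_eq_one_left hw,
    inv_eq_of_mul_eq_one_left hz]

lemma brab : a * b * a = b * a * b := braid_of haa hbb (pair 0 1 (by decide))
lemma brac : a * c * a = c * a * c := braid_of haa hcc (pair 0 2 (by decide))
lemma brbc : b * c * b = c * b * c := braid_of hbb hcc (pair 1 2 (by decide))

lemma hww : (a * b * a) * (a * b * a) = 1 := by
  simp only [mul_assoc, cancel haa, cancel hbb, haa, hbb]

lemma cmabac : (a * b * a) * c = c * (a * b * a) :=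
  comm_of hww hcc (trip 0 1 2 (by decide) (by decide) (by decide))

def u : Fin 6 → G := fun i => match i with
  | 0 => 1 | 1 => a | 2 => b | 3 => a * b | 4 => b * a | 5 => a * b * a

def v : Fin 4 → G := fun j => match j with
  | 0 => 1 | 1 => c | 2 => c * a | 3 => c * b

lemma umul_a (i : Fin 6) : ∃ j, u i * a = u j := by
  fin_cases i
  · exact ⟨1, one_mul a⟩
  · exact ⟨0, haa⟩
  · exact ⟨4, rfl⟩
  · exact ⟨5, rfl⟩
  · exact ⟨2, by show b * a * a = b; simp only [mul_assoc, haa, mul_one]⟩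
  · exact ⟨3, by show a * b * a * a = a * b; simp only [mul_assoc, haa, mul_one]⟩

lemma umul_b (i : Fin 6) : ∃ j, u i * b = u j := by
  fin_cases i
  · exact ⟨2, one_mul b⟩
  · exact ⟨3, rfl⟩
  · exact ⟨0, hbb⟩
  · exact ⟨1, by show a * b * b = a; simp only [mul_assoc, hbb, mul_one]⟩
  · exact ⟨5, brab.symm⟩
  · exact ⟨4, by show a * b * a * b = b * a; rw [brab]; simp only [mul_assoc, hbb, mul_one]⟩

lemma K1 : c * a * c = a * (c * a) := by rw [← brac]; simp only [mul_assoc]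

lemma K1' : c * b * c = b * (c * b) := by rw [← brbc]; simp only [mul_assoc]

lemma K2 : c * a * b = (a * b * a) * (c * a) := by
  rw [← mul_assoc, cmabac]
  simp only [mul_assoc, haa, mul_one]

lemma brab' : a * (b * (a * b)) = b * a := by
  rw [← mul_assoc, ← mul_assoc, brab]; simp only [mul_assoc, hbb, mul_one]

lemma K3 : c * b * a = (a * b * a) * (c * b) := by
  rw [← mul_assoc, cmabac]
  simp only [mul_assoc, brab']

lemma step (m : Fin 3) (i : Fin 6) (j : Fin 4) :
    ∃ i' j', (u i * v j) * PresentedGroup.of m = u i' * v j' := by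
  obtain ⟨i1, h1⟩ := umul_a i
  obtain ⟨i2, h2⟩ := umul_b i1
  obtain ⟨i3, h3⟩ := umul_a i2
  obtain ⟨i1', h1'⟩ := umul_b i
  have hu : u i * (a * b * a) = u i3 := by
    rw [show (a * b * a : G) = a * (b * a) by rw [mul_assoc], ← mul_assoc, h1,
      ← mul_assoc, h2, h3]
  fin_cases m <;> fin_cases j
  · exact ⟨i1, 0, by show u i * 1 * a = u i1 * 1; rw [mul_one, mul_one, h1]⟩
  · exact ⟨i, 2, by show u i * c * a = u i * (c * a); rw [mul_assoc]⟩
  · exact ⟨i, 1, by show u i * (c * a) * a = u i * c; simp only [mul_assoc, haa, mul_one]⟩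
  · refine ⟨i3, 3, ?_⟩
    show u i * (c * b) * a = u i3 * (c * b)
    rw [mul_assoc, K3, ← mul_assoc, hu]
  · exact ⟨i1', 0, by show u i * 1 * b = u i1' * 1; rw [mul_one, mul_one, h1']⟩
  · exact ⟨i, 3, by show u i * c * b = u i * (c * b); rw [mul_assoc]⟩
  · refine ⟨i3, 2, ?_⟩
    show u i * (c * a) * b = u i3 * (c * a)
    rw [mul_assoc, K2, ← mul_assoc, hu]
  · exact ⟨i, 1, by show u i * (c * b) * b = u i * c; simp only [mul_assoc, hbb, mul_one]⟩
  · exact ⟨i, 1, by show u i * 1 * c = u i * c; rw [mul_one]⟩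
  · exact ⟨i, 0, by show u i * c * c = u i * 1; simp only [mul_assoc, hcc]⟩
  · refine ⟨i1, 2, ?_⟩
    show u i * (c * a) * c = u i1 * (c * a)
    rw [mul_assoc, K1, ← mul_assoc, h1]
  · refine ⟨i1', 3, ?_⟩
    show u i * (c * b) * c = u i1' * (c * b)
    rw [mul_assoc, K1', ← mul_assoc, h1']

lemma main (x : G) : ∃ i j, x = u i * v j := by
  have key : ∀ w : FreeGroup (Fin 3), ∀ y : G, (∃ i j, y = u i * v j) →
      ∃ i j, y * PresentedGroup.mk rels₃ w = u i * v j := by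
    intro w
    induction w using FreeGroup.induction_on with
    | C1 => intro y hy; simpa using hy
    | of m => rintro y ⟨i, j, rfl⟩; exact step m i j
    | inv_of m _ =>
        rintro y ⟨i, j, rfl⟩
        have hm : (PresentedGroup.mk rels₃ (FreeGroup.of m : FreeGroup (Fin 3))⁻¹)
            = PresentedGroup.of m := by
          rw [map_inv]
          exact inv_eq_of_mul_eq_one_left (by have := sq m; rwa [pow_two] at this)
        rw [hm]; exact step m i j
    | mul w1 w2 ih1 ih2 =>
        intro y hy
        rw [map_mul, ← mul_assoc]
        exact ih2 _ (ih1 _ hy)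
  induction x using PresentedGroup.induction_on with
  | _ w => simpa using key w 1 ⟨0, 0, (one_mul (1 : G)).symm⟩

noncomputable def π3 : G →* Equiv.Perm (Fin 4) := PresentedGroup.toGroup hrel

lemma π3_surj : Function.Surjective π3 := by
  rw [← MonoidHom.range_eq_top]
  rw [eq_top_iff, ← Equiv.Perm.closure_isSwap, Subgroup.closure_le]
  rintro σ ⟨x, y, hxy, rfl⟩
  have hof : ∀ i : Fin 3, π3 (PresentedGroup.of i) = fgen i := fun i => PresentedGroup.toGroup.of hrel
  fin_cases x <;> fin_cases y <;> try (exact absurd rfl hxy)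
  all_goals first
    | exact ⟨(PresentedGroup.of 0 : G), by simp only [map_mul, hof]; decide⟩
    | exact ⟨(PresentedGroup.of 1 : G), by simp only [map_mul, hof]; decide⟩
    | exact ⟨(PresentedGroup.of 2 : G), by simp only [map_mul, hof]; decide⟩
    | exact ⟨(PresentedGroup.of 0 * PresentedGroup.of 1 * PresentedGroup.of 0 :
        G), by simp only [map_mul, hof]; decide⟩
    | exact ⟨(PresentedGroup.of 0 * PresentedGroup.of 2 * PresentedGroup.of 0 :
        G), by simp only [map_mul, hof]; decide⟩
    | exact ⟨(PresentedGroup.of 1 * PresentedGroup.of 2 * PresentedGroup.of 1 :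
        G), by simp only [map_mul, hof]; decide⟩

lemma psurj : Function.Surjective (fun p : Fin 6 × Fin 4 => u p.1 * v p.2) := fun x => by
  obtain ⟨i, j, h⟩ := main x; exact ⟨(i, j), h.symm⟩

lemma finG : Finite G := Finite.of_surjective _ psurj

lemma π3_bij : Function.Bijective π3 := by
  have : Finite G := finG
  rw [Nat.bijective_iff_surjective_and_card]
  refine ⟨π3_surj, le_antisymm ?_ (Nat.card_le_card_of_surjective π3 π3_surj)⟩
  calc Nat.card G ≤ Nat.card (Fin 6 × Fin 4) := Nat.card_le_card_of_surjective _ psurj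
  _ = 24 := by simp [Nat.card_eq_fintype_card]
  _ = Nat.card (Equiv.Perm (Fin 4)) := by
      simp [Nat.card_eq_fintype_card, Fintype.card_perm]; rfl

lemma hφ : (FreeGroup.lift fgen : FreeGroup (Fin 3) →* Equiv.Perm (Fin 4))
    = π3.comp (PresentedGroup.mk rels₃) := by
  apply FreeGroup.ext_hom
  intro i
  rw [FreeGroup.lift_apply_of]
  exact (PresentedGroup.toGroup.of hrel).symm

lemma hker : (FreeGroup.lift fgen : FreeGroup (Fin 3) →* Equiv.Perm (Fin 4)).ker
    = Subgroup.normalClosure rels₃ := by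
  rw [hφ, ← MonoidHom.comap_ker, (MonoidHom.ker_eq_bot_iff π3).mpr π3_bij.injective,
    MonoidHom.comap_bot]
  ext x
  exact QuotientGroup.eq_one_iff x

end S4P

/-- The homomorphism `FreeGroup (Fin 3) → S₄` sending `sᵢ ↦ (0 i+1)` is surjective with kernel
the normal closure of the relators `sᵢ²`, `(sᵢsⱼ)³` (`i ≠ j`), `(sᵢsⱼsᵢs_k)²` (`i,j,k` pairwise
distinct); equivalently, `S₄` is isomorphic to the corresponding presented group. -/
theorem stmt_18 :
    Function.Surjective
      (FreeGroup.lift ![Equiv.swap 0 1, Equiv.swap 0 2, Equiv.swap 0 3] :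
        FreeGroup (Fin 3) →* Equiv.Perm (Fin 4)) ∧
    (FreeGroup.lift ![Equiv.swap 0 1, Equiv.swap 0 2, Equiv.swap 0 3] :
        FreeGroup (Fin 3) →* Equiv.Perm (Fin 4)).ker
      = Subgroup.normalClosure rels₃ ∧
    Nonempty (PresentedGroup rels₃ ≃* Equiv.Perm (Fin 4)) := by
  refine ⟨?_, S4P.hker, ⟨MulEquiv.ofBijective S4P.π3 S4P.π3_bij⟩⟩
  rw [show (FreeGroup.lift ![Equiv.swap 0 1, Equiv.swap 0 2, Equiv.swap 0 3] :
      FreeGroup (Fin 3) →* Equiv.Perm (Fin 4)) = S4P.π3.comp (PresentedGroup.mk rels₃)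
      from S4P.hφ, MonoidHom.coe_comp]
  exact S4P.π3_surj.comp (PresentedGroup.mk_surjective rels₃)
end
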